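/- (Linear Offsets for sequence triads.) Suppose that (a_i), (b_i), (c_i) form a length s Golay sequence triad over ℤ₃, and let e ∈ ℤ₃. Then the sequences (a_i + e·i), (b_i + e·i), (c_i + e·i) over ℤ₃ also form a length s Golay sequence triad over ℤ₃. -/
import Mathlib


open scoped BigOperators

/-- `ω = e^{2πi/3}`, a primitive cube root of unity. -/
noncomputable def ω : ℂ := Complex.exp (2 * Real.pi * Complex.I / 3)

/-- Aperiodic autocorrelation function `C_A(u) = Σ_{i ∈ ℤ} A(i) conj(A(i+u))`. -/
noncomputable def aperCorr (A : ℤ → ℂ) (u : ℤ) : ℂ :=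
  ∑' i : ℤ, A i * (starRingEnd ℂ) (A (i + u))

/-- The 3-phase length-`s` sequence corresponding to a length-`s` sequence over
`ℤ₃`: `A(i) = ω^{a(i)}` for `0 ≤ i < s`, and `A(i) = 0` otherwise. -/
noncomputable def toSeq (s : ℕ) (a : ℤ → ZMod 3) : ℤ → ℂ :=
  fun i => if 0 ≤ i ∧ i < (s : ℤ) then ω ^ (a i).val else 0

/-- Three length-`s` sequences over `ℤ₃` forming a length-`s` Golay sequence
triad over `ℤ₃`: their corresponding 3-phase sequences satisfy
`C_A(u) + C_B(u) + C_C(u) = 0` for all `u ≠ 0`. -/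
def GolayTriadZ3 (s : ℕ) (a b c : ℤ → ZMod 3) : Prop :=
  ∀ u : ℤ, u ≠ 0 →
    aperCorr (toSeq s a) u + aperCorr (toSeq s b) u + aperCorr (toSeq s c) u = 0

lemma ω_pow_three : ω ^ 3 = 1 := by
  rw [ω, ← Complex.exp_nat_mul]
  rw [show ((3:ℕ):ℂ) * (2 * Real.pi * Complex.I / 3) = 2 * Real.pi * Complex.I by
    push_cast; ring]
  exact Complex.exp_two_pi_mul_I

lemma conj_ω_mul : (starRingEnd ℂ) ω * ω = 1 := by
  rw [ω, ← Complex.exp_conj, ← Complex.exp_add]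
  rw [show (starRingEnd ℂ) (2 * Real.pi * Complex.I / 3) + 2 * Real.pi * Complex.I / 3 = 0 by
    simp [map_div₀, Complex.conj_I, map_ofNat]; ring]
  exact Complex.exp_zero

/-- The phase `ω^{x}` of an element of `ℤ₃`. -/
noncomputable def ph (x : ZMod 3) : ℂ := ω ^ x.val

lemma ph_mod (n : ℕ) : ω ^ (n % 3) = ω ^ n := (pow_eq_pow_mod n ω_pow_three).symm

lemma ph_add (x y : ZMod 3) : ph (x + y) = ph x * ph y := by
  unfold ph
  rw [← pow_add, ZMod.val_add, ph_mod]

lemma ph_zero : ph 0 = 1 := by simp [ph]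

lemma ω_ne_zero : ω ≠ 0 := Complex.exp_ne_zero _

lemma ph_ne_zero (x : ZMod 3) : ph x ≠ 0 := pow_ne_zero _ ω_ne_zero

lemma conj_ph (x : ZMod 3) : (starRingEnd ℂ) (ph x) = ph (-x) := by
  have h1 : (starRingEnd ℂ) (ph x) * ph x = 1 := by
    unfold ph
    rw [map_pow, ← mul_pow, conj_ω_mul, one_pow]
  have h2 : ph (-x) * ph x = 1 := by rw [← ph_add, neg_add_cancel, ph_zero]
  exact mul_right_cancel₀ (ph_ne_zero x) (h1.trans h2.symm)

lemma toSeq_offset (s : ℕ) (a : ℤ → ZMod 3) (e : ZMod 3) (i : ℤ) :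
    toSeq s (fun j => a j + e * (j : ZMod 3)) i = ph (e * (i : ZMod 3)) * toSeq s a i := by
  unfold toSeq
  split_ifs with hih
  · show ph (a i + e * (i : ZMod 3)) = ph (e * (i : ZMod 3)) * ph (a i)
    rw [ph_add, mul_comm]
  · rw [mul_zero]

lemma corr_offset (s : ℕ) (a : ℤ → ZMod 3) (e : ZMod 3) (u : ℤ) :
    aperCorr (toSeq s (fun j => a j + e * (j : ZMod 3))) u
      = ph (-(e * (u : ZMod 3))) * aperCorr (toSeq s a) u := by
  unfold aperCorr
  rw [← tsum_mul_left]
  congr 1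
  funext i
  rw [toSeq_offset, toSeq_offset, map_mul, conj_ph]
  have key : ph (e * (i : ZMod 3)) * ph (-(e * (((i + u : ℤ)) : ZMod 3)))
      = ph (-(e * (u : ZMod 3))) := by
    rw [← ph_add]
    congr 1
    push_cast
    ring
  rw [← key]
  ring

/-- (Linear Offsets.) If `(a_i), (b_i), (c_i)` form a length-`s` Golay sequence
triad over `ℤ₃` and `e ∈ ℤ₃`, then `(a_i + e·i), (b_i + e·i), (c_i + e·i)`
also form a length-`s` Golay sequence triad over `ℤ₃`. -/
theorem golay_triad_linear_offset (s : ℕ) (a b c : ℤ → ZMod 3)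
    (h : GolayTriadZ3 s a b c) (e : ZMod 3) :
    GolayTriadZ3 s (fun i => a i + e * (i : ZMod 3))
      (fun i => b i + e * (i : ZMod 3)) (fun i => c i + e * (i : ZMod 3)) := by
  intro u hu
  rw [corr_offset, corr_offset, corr_offset, ← mul_add, ← mul_add, h u hu, mul_zero]
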